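/- (Stokes' formula for triangles) For all x, y, z ∈ ℝ²: ∫_{⟨x,y,z⟩}B = ∫_{[x,y]}A + ∫_{[y,z]}A + ∫_{[z,x]}A; i.e. the flux of the magnetic field B = dA through the oriented triangle ⟨x,y,z⟩ equals the circulation of A along its oriented boundary. -/

import Mathlib

open MeasureTheory

/-- The `j`-th component of a vector in `ℝ × ℝ` (`j ∈ {0, 1}` standing for `{1, 2}`). -/
noncomputable def comp2 (j : Fin 2) (v : ℝ × ℝ) : ℝ := if j = 0 then v.1 else v.2

/-- The `j`-th partial derivative of `f : ℝ × ℝ → ℝ` at `p`. -/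
noncomputable def pderiv2 (j : Fin 2) (f : ℝ × ℝ → ℝ) (p : ℝ × ℝ) : ℝ :=
  fderiv ℝ f p (if j = 0 then ((1 : ℝ), (0 : ℝ)) else ((0 : ℝ), (1 : ℝ)))

/-- The circulation `∫_{[x,y]} A := Σ_j (y_j − x_j) ∫₀¹ A_j (x + t(y − x)) dt` of a vector
potential `A` along the oriented segment `[x, y]`. -/
noncomputable def circulation (A : ℝ × ℝ → ℝ × ℝ) (x y : ℝ × ℝ) : ℝ :=
  ∑ j : Fin 2, (comp2 j y - comp2 j x) * ∫ t in (0:ℝ)..1, comp2 j (A (x + t • (y - x)))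

/-- The magnetic field `B_{jk} := ∂_j A_k − ∂_k A_j` associated to the vector potential `A`. -/
noncomputable def fieldB (A : ℝ × ℝ → ℝ × ℝ) (j k : Fin 2) (p : ℝ × ℝ) : ℝ :=
  pderiv2 j (fun q => comp2 k (A q)) p - pderiv2 k (fun q => comp2 j (A q)) p

/-- The flux `∫_{⟨x,y,z⟩} B := Σ_{j,k} (y_j − x_j)(z_k − x_k) ∫₀¹ ∫₀^t B_{jk}(x + t(y−x) + s(z−y)) ds dt`
of the magnetic field `B = dA` through the oriented triangle `⟨x, y, z⟩`. -/
noncomputable def flux (A : ℝ × ℝ → ℝ × ℝ) (x y z : ℝ × ℝ) : ℝ :=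
  ∑ j : Fin 2, ∑ k : Fin 2, (comp2 j y - comp2 j x) * (comp2 k z - comp2 k x) *
    ∫ t in (0:ℝ)..1, ∫ s in (0:ℝ)..t, fieldB A j k (x + t • (y - x) + s • (z - y))


lemma hasDerivAt_line (f : ℝ × ℝ → ℝ) (hf : Differentiable ℝ f) (q w : ℝ × ℝ) (r : ℝ) :
    HasDerivAt (fun r : ℝ => f (q + r • w)) (fderiv ℝ f (q + r • w) w) r := by
  have h1 : HasDerivAt (fun r : ℝ => q + r • w) w r := by
    simpa using ((hasDerivAt_id r).smul_const w).const_add q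
  exact ((hf (q + r • w)).hasFDerivAt.comp_hasDerivAt r h1)

lemma fderiv_apply_pderiv (f : ℝ × ℝ → ℝ) (p w : ℝ × ℝ) :
    fderiv ℝ f p w = w.1 * pderiv2 0 f p + w.2 * pderiv2 1 f p := by
  have hw : w = w.1 • ((1:ℝ), (0:ℝ)) + w.2 • ((0:ℝ), (1:ℝ)) := by
    ext <;> simp
  rw [show (fderiv ℝ f p) w
      = (fderiv ℝ f p) (w.1 • ((1:ℝ),(0:ℝ)) + w.2 • ((0:ℝ),(1:ℝ))) from by rw [← hw]]
  rw [map_add, _root_.map_smul, _root_.map_smul]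
  simp [pderiv2]

lemma fderiv_dot (a b : ℝ) (f g : ℝ × ℝ → ℝ) (hf : Differentiable ℝ f)
    (hg : Differentiable ℝ g) (p w : ℝ × ℝ) :
    fderiv ℝ (fun q => a * f q + b * g q) p w
      = a * fderiv ℝ f p w + b * fderiv ℝ g p w := by
  rw [fderiv_fun_add ((hf p).const_mul a) ((hg p).const_mul b)]
  rw [fderiv_const_mul (hf p) a, fderiv_const_mul (hg p) b]
  simp

lemma key_identity (A : ℝ × ℝ → ℝ × ℝ) (hA : ContDiff ℝ 1 A) (u v p : ℝ × ℝ) :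
    (u.1 * v.2 - u.2 * v.1) * fieldB A 0 1 p
      = fderiv ℝ (fun q => v.1 * (A q).1 + v.2 * (A q).2) p u
        - fderiv ℝ (fun q => u.1 * (A q).1 + u.2 * (A q).2) p v := by
  have hA1 : Differentiable ℝ fun q => (A q).1 :=
    (contDiff_fst.comp hA).differentiable one_ne_zero
  have hA2 : Differentiable ℝ fun q => (A q).2 :=
    (contDiff_snd.comp hA).differentiable one_ne_zero
  rw [fderiv_dot v.1 v.2 _ _ hA1 hA2 p u, fderiv_dot u.1 u.2 _ _ hA1 hA2 p v]
  rw [fderiv_apply_pderiv (fun q => (A q).1) p u, fderiv_apply_pderiv (fun q => (A q).2) p u,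
    fderiv_apply_pderiv (fun q => (A q).1) p v, fderiv_apply_pderiv (fun q => (A q).2) p v]
  have : fieldB A 0 1 p
      = pderiv2 0 (fun q => (A q).2) p - pderiv2 1 (fun q => (A q).1) p := by
    simp [fieldB, comp2]
  rw [this]
  ring

lemma diag_null : (volume.prod volume) {p : ℝ × ℝ | p.1 = p.2} = 0 := by
  have hD : MeasurableSet {p : ℝ × ℝ | p.1 = p.2} :=
    measurableSet_eq_fun measurable_fst measurable_snd
  rw [MeasureTheory.Measure.prod_apply hD]
  have : ∀ x : ℝ, (volume (Prod.mk x ⁻¹' {p : ℝ × ℝ | p.1 = p.2})) = 0 := by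
    intro x
    have : (Prod.mk x ⁻¹' {p : ℝ × ℝ | p.1 = p.2}) = {x} := by
      ext s; simp [eq_comm]
    rw [this]; simp
  simp [this]

lemma tri_swap (g : ℝ → ℝ → ℝ) (hg : Continuous (fun p : ℝ × ℝ => g p.1 p.2)) :
    (∫ t in (0:ℝ)..1, ∫ s in (0:ℝ)..t, g t s)
      = ∫ s in (0:ℝ)..1, ∫ t in s..1, g t s := by
  set G : ℝ × ℝ → ℝ := fun p => g p.1 p.2 with hG
  set T : Set (ℝ × ℝ) := {p | 0 < p.2 ∧ p.2 ≤ p.1 ∧ p.1 ≤ 1} with hT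
  set T' : Set (ℝ × ℝ) := {p | 0 < p.2 ∧ p.2 < p.1 ∧ p.1 ≤ 1} with hT'
  have hTm : MeasurableSet T := by
    apply MeasurableSet.inter
    · exact measurableSet_lt measurable_const measurable_snd
    apply MeasurableSet.inter
    · exact measurableSet_le measurable_snd measurable_fst
    · exact measurableSet_le measurable_fst measurable_const
  have hT'm : MeasurableSet T' := by
    apply MeasurableSet.inter
    · exact measurableSet_lt measurable_const measurable_snd
    apply MeasurableSet.inter
    · exact measurableSet_lt measurable_snd measurable_fst
    · exact measurableSet_le measurable_fst measurable_const
  have hsub : ∀ S : Set (ℝ × ℝ), S ⊆ T → IntegrableOn G S volume := by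
    intro S hS
    apply IntegrableOn.mono_set (t := Set.Icc ((0:ℝ),(0:ℝ)) ((1:ℝ),(1:ℝ)))
    · exact hg.continuousOn.integrableOn_compact isCompact_Icc
    · intro p hp
      rcases hS hp with ⟨h1, h2, h3⟩
      constructor <;> constructor <;> simp <;> nlinarith
  have hintT : Integrable (T.indicator G) volume :=
    (hsub T (le_refl _)).integrable_indicator hTm
  have hintT' : Integrable (T'.indicator G) volume :=
    (hsub T' (fun p hp => ⟨hp.1, hp.2.1.le, hp.2.2⟩)).integrable_indicator hT'm
  have claim1 : (∫ t in (0:ℝ)..1, ∫ s in (0:ℝ)..t, g t s)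
      = ∫ t : ℝ, ∫ s : ℝ, T.indicator G (t, s) := by
    have : ∀ t : ℝ, (∫ s : ℝ, T.indicator G (t, s))
        = (Set.Ioc (0:ℝ) 1).indicator (fun t => ∫ s in (0:ℝ)..t, g t s) t := by
      intro t
      by_cases ht : t ∈ Set.Ioc (0:ℝ) 1
      · rw [Set.indicator_of_mem ht]
        have : ∀ s : ℝ, T.indicator G (t, s) = (Set.Ioc (0:ℝ) t).indicator (fun s => g t s) s := by
          intro s
          by_cases hs : s ∈ Set.Ioc (0:ℝ) t
          · rw [Set.indicator_of_mem hs,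
              Set.indicator_of_mem (show (t,s) ∈ T from ⟨hs.1, hs.2, ht.2⟩)]
          · rw [Set.indicator_of_notMem hs, Set.indicator_of_notMem]
            intro hmem
            exact hs ⟨hmem.1, hmem.2.1⟩
        simp_rw [this]
        rw [integral_indicator measurableSet_Ioc,
          intervalIntegral.integral_of_le ht.1.le]
      · rw [Set.indicator_of_notMem ht]
        have : ∀ s : ℝ, T.indicator G (t, s) = 0 := by
          intro s
          apply Set.indicator_of_notMem
          intro hmem
          exact ht ⟨lt_of_lt_of_le hmem.1 hmem.2.1, hmem.2.2⟩
        simp [this]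
    simp_rw [this]
    rw [integral_indicator measurableSet_Ioc,
      intervalIntegral.integral_of_le (zero_le_one)]
  have claim2 : (∫ s in (0:ℝ)..1, ∫ t in s..1, g t s)
      = ∫ s : ℝ, ∫ t : ℝ, T'.indicator G (t, s) := by
    have : ∀ s : ℝ, (∫ t : ℝ, T'.indicator G (t, s))
        = (Set.Ioc (0:ℝ) 1).indicator (fun s => ∫ t in s..1, g t s) s := by
      intro s
      by_cases hs : s ∈ Set.Ioc (0:ℝ) 1
      · rw [Set.indicator_of_mem hs]
        have : ∀ t : ℝ, T'.indicator G (t, s) = (Set.Ioc s 1).indicator (fun t => g t s) t := by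
          intro t
          by_cases ht : t ∈ Set.Ioc s 1
          · rw [Set.indicator_of_mem ht,
              Set.indicator_of_mem (show (t,s) ∈ T' from ⟨hs.1, ht.1, ht.2⟩)]
          · rw [Set.indicator_of_notMem ht, Set.indicator_of_notMem]
            intro hmem
            exact ht ⟨hmem.2.1, hmem.2.2⟩
        simp_rw [this]
        rw [integral_indicator measurableSet_Ioc,
          intervalIntegral.integral_of_le hs.2]
      · rw [Set.indicator_of_notMem hs]
        have : ∀ t : ℝ, T'.indicator G (t, s) = 0 := by
          intro t
          apply Set.indicator_of_notMem
          intro hmem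
          exact hs ⟨hmem.1, le_trans hmem.2.1.le hmem.2.2⟩
        simp [this]
    simp_rw [this]
    rw [integral_indicator measurableSet_Ioc,
      intervalIntegral.integral_of_le (zero_le_one)]
  rw [claim1, claim2]
  have h1 : (∫ t : ℝ, ∫ s : ℝ, T.indicator G (t, s))
      = ∫ p : ℝ × ℝ, T.indicator G p ∂(volume.prod volume) := by
    exact (MeasureTheory.integral_prod _ (by rwa [← Measure.volume_eq_prod])).symm
  have h2 : (∫ s : ℝ, ∫ t : ℝ, T'.indicator G (t, s))
      = ∫ p : ℝ × ℝ, T'.indicator G p ∂(volume.prod volume) := by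
    exact (MeasureTheory.integral_prod_symm _ (by rwa [← Measure.volume_eq_prod])).symm
  rw [h1, h2]
  apply integral_congr_ae
  have hae : ∀ᵐ p : ℝ × ℝ ∂(volume.prod volume), p ∉ {q : ℝ × ℝ | q.1 = q.2} :=
    measure_eq_zero_iff_ae_notMem.mp diag_null
  filter_upwards [hae] with p hp
  by_cases hpT : p ∈ T'
  · rw [Set.indicator_of_mem hpT, Set.indicator_of_mem (show p ∈ T from ⟨hpT.1, hpT.2.1.le, hpT.2.2⟩)]
  · rw [Set.indicator_of_notMem hpT, Set.indicator_of_notMem]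
    intro hmem
    exact hpT ⟨hmem.1, lt_of_le_of_ne hmem.2.1 (fun h => hp h.symm), hmem.2.2⟩

lemma core (A : ℝ × ℝ → ℝ × ℝ) (hA : ContDiff ℝ 1 A) (x u v : ℝ × ℝ) :
    (∫ t in (0:ℝ)..1, ∫ s in (0:ℝ)..t,
        ((u.1 * v.2 - u.2 * v.1) * fieldB A 0 1 (x + t • u + s • v)))
      = (∫ t in (0:ℝ)..1, (u.1 * (A (x + t • u)).1 + u.2 * (A (x + t • u)).2))
        + (∫ s in (0:ℝ)..1, (v.1 * (A (x + u + s • v)).1 + v.2 * (A (x + u + s • v)).2))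
        - (∫ t in (0:ℝ)..1, ((u.1 + v.1) * (A (x + t • (u + v))).1
            + (u.2 + v.2) * (A (x + t • (u + v))).2)) := by
  have hA1 : ContDiff ℝ 1 fun q => (A q).1 := contDiff_fst.comp hA
  have hA2 : ContDiff ℝ 1 fun q => (A q).2 := contDiff_snd.comp hA
  set P : ℝ × ℝ → ℝ := fun p => u.1 * (A p).1 + u.2 * (A p).2 with hPdef
  set Q : ℝ × ℝ → ℝ := fun p => v.1 * (A p).1 + v.2 * (A p).2 with hQdef
  have hPc : ContDiff ℝ 1 P := (contDiff_const.mul hA1).add (contDiff_const.mul hA2)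
  have hQc : ContDiff ℝ 1 Q := (contDiff_const.mul hA1).add (contDiff_const.mul hA2)
  have hPd : Differentiable ℝ P := hPc.differentiable one_ne_zero
  have hQd : Differentiable ℝ Q := hQc.differentiable one_ne_zero
  have hPf : Continuous fun p => fderiv ℝ P p v :=
    (hPc.continuous_fderiv one_ne_zero).clm_apply continuous_const
  have hQf : Continuous fun p => fderiv ℝ Q p u :=
    (hQc.continuous_fderiv one_ne_zero).clm_apply continuous_const
  have hγ : Continuous fun p : ℝ × ℝ => x + p.1 • u + p.2 • v := by fun_prop
  -- pointwise identity
  have key : ∀ p : ℝ × ℝ, (u.1 * v.2 - u.2 * v.1) * fieldB A 0 1 p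
      = fderiv ℝ Q p u - fderiv ℝ P p v := fun p => key_identity A hA u v p
  -- FTC in s
  have ftc_s : ∀ t : ℝ, (∫ s in (0:ℝ)..t, fderiv ℝ P (x + t • u + s • v) v)
      = P (x + t • u + t • v) - P (x + t • u + (0:ℝ) • v) := by
    intro t
    have hint : IntervalIntegrable (fun s : ℝ => fderiv ℝ P (x + t • u + s • v) v) volume 0 t :=
      Continuous.intervalIntegrable (by exact hPf.comp (by fun_prop)) 0 t
    exact intervalIntegral.integral_eq_sub_of_hasDerivAt
      (f := fun s : ℝ => P (x + t • u + s • v))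
      (fun r _ => hasDerivAt_line P hPd (x + t • u) v r) hint
  -- FTC in t
  have ftc_t : ∀ s : ℝ, (∫ t in s..1, fderiv ℝ Q (x + t • u + s • v) u)
      = Q (x + (1:ℝ) • u + s • v) - Q (x + s • u + s • v) := by
    intro s
    have harr : ∀ t : ℝ, x + t • u + s • v = (x + s • v) + t • u := fun t => by abel
    simp_rw [harr]
    have hint : IntervalIntegrable (fun t : ℝ => fderiv ℝ Q (x + s • v + t • u) u) volume s 1 :=
      Continuous.intervalIntegrable (by exact hQf.comp (by fun_prop)) s 1
    exact intervalIntegral.integral_eq_sub_of_hasDerivAt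
      (f := fun t : ℝ => Q (x + s • v + t • u))
      (fun r _ => hasDerivAt_line Q hQd (x + s • v) u r) hint
  -- rewrite integrand
  simp_rw [key]
  -- split inner integral and apply s-FTC
  have inner_eq : ∀ t : ℝ,
      (∫ s in (0:ℝ)..t, (fderiv ℝ Q (x + t • u + s • v) u - fderiv ℝ P (x + t • u + s • v) v))
        = (∫ s in (0:ℝ)..t, fderiv ℝ Q (x + t • u + s • v) u)
          - (P (x + t • u + t • v) - P (x + t • u + (0:ℝ) • v)) := by
    intro t
    have i1 : IntervalIntegrable (fun s : ℝ => fderiv ℝ Q (x + t • u + s • v) u) volume 0 t :=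
      Continuous.intervalIntegrable (by exact hQf.comp (by fun_prop)) 0 t
    have i2 : IntervalIntegrable (fun s : ℝ => fderiv ℝ P (x + t • u + s • v) v) volume 0 t :=
      Continuous.intervalIntegrable (by exact hPf.comp (by fun_prop)) 0 t
    rw [intervalIntegral.integral_sub i1 i2, ftc_s t]
  simp_rw [inner_eq]
  -- split outer integral
  have hcont1 : Continuous fun t : ℝ => ∫ s in (0:ℝ)..t, fderiv ℝ Q (x + t • u + s • v) u := by
    apply intervalIntegral.continuous_parametric_intervalIntegral_of_continuous
    · exact (by exact hQf.comp hγ :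
        Continuous fun p : ℝ × ℝ => fderiv ℝ Q (x + p.1 • u + p.2 • v) u)
    · exact continuous_id
  have hcont2 : Continuous fun t : ℝ => P (x + t • u + t • v) :=
    hPc.continuous.comp (by fun_prop)
  have hcont3 : Continuous fun t : ℝ => P (x + t • u + (0:ℝ) • v) :=
    hPc.continuous.comp (by fun_prop)
  rw [intervalIntegral.integral_sub (hcont1.intervalIntegrable 0 1)
    ((by exact hcont2.sub hcont3 : Continuous fun t : ℝ =>
      P (x + t • u + t • v) - P (x + t • u + (0:ℝ) • v)).intervalIntegrable 0 1),
    intervalIntegral.integral_sub (hcont2.intervalIntegrable 0 1)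
    (hcont3.intervalIntegrable 0 1)]
  -- swap + FTC in t
  have hswap : (∫ t in (0:ℝ)..1, ∫ s in (0:ℝ)..t, fderiv ℝ Q (x + t • u + s • v) u)
      = ∫ s in (0:ℝ)..1, ∫ t in s..1, fderiv ℝ Q (x + t • u + s • v) u :=
    tri_swap (fun t s => fderiv ℝ Q (x + t • u + s • v) u)
      (by exact hQf.comp hγ)
  rw [hswap]
  simp_rw [ftc_t]
  have hcont4 : Continuous fun s : ℝ => Q (x + (1:ℝ) • u + s • v) :=
    hQc.continuous.comp (by fun_prop)
  have hcont5 : Continuous fun s : ℝ => Q (x + s • u + s • v) :=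
    hQc.continuous.comp (by fun_prop)
  rw [intervalIntegral.integral_sub (hcont4.intervalIntegrable 0 1)
    (hcont5.intervalIntegrable 0 1)]
  -- now identify pieces with RHS
  have e1 : (∫ t in (0:ℝ)..1, P (x + t • u + (0:ℝ) • v))
      = ∫ t in (0:ℝ)..1, (u.1 * (A (x + t • u)).1 + u.2 * (A (x + t • u)).2) := by
    apply intervalIntegral.integral_congr
    intro t _
    simp [hPdef]
  have e2 : (∫ s in (0:ℝ)..1, Q (x + (1:ℝ) • u + s • v))
      = ∫ s in (0:ℝ)..1, (v.1 * (A (x + u + s • v)).1 + v.2 * (A (x + u + s • v)).2) := by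
    apply intervalIntegral.integral_congr
    intro s _
    simp [hQdef]
  have e3 : (∫ t in (0:ℝ)..1, ((u.1 + v.1) * (A (x + t • (u + v))).1
        + (u.2 + v.2) * (A (x + t • (u + v))).2))
      = (∫ t in (0:ℝ)..1, P (x + t • u + t • v)) + ∫ s in (0:ℝ)..1, Q (x + s • u + s • v) := by
    rw [← intervalIntegral.integral_add (hcont2.intervalIntegrable 0 1)
      (hcont5.intervalIntegrable 0 1)]
    apply intervalIntegral.integral_congr
    intro t _
    have h : x + t • (u + v) = x + t • u + t • v := by
      rw [smul_add]; abel
    simp only [hPdef, hQdef, h]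
    ring
  rw [e1, e2, e3]
  ring

lemma reflect_integral (f : ℝ → ℝ) : (∫ t in (0:ℝ)..1, f (1 - t)) = ∫ t in (0:ℝ)..1, f t := by
  rw [intervalIntegral.integral_comp_sub_left f 1]
  norm_num

lemma circ_repr (A : ℝ × ℝ → ℝ × ℝ) (hA : Continuous A) (p q : ℝ × ℝ) :
    circulation A p q = ∫ t in (0:ℝ)..1,
      ((q - p).1 * (A (p + t • (q - p))).1 + (q - p).2 * (A (p + t • (q - p))).2) := by
  rw [circulation, Fin.sum_univ_two]
  rw [intervalIntegral.integral_add
    (Continuous.intervalIntegrable (by fun_prop) 0 1)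
    (Continuous.intervalIntegrable (by fun_prop) 0 1)]
  simp [comp2, intervalIntegral.integral_const_mul, Prod.fst_sub, Prod.snd_sub]

theorem stmt17 (A : ℝ × ℝ → ℝ × ℝ) (hA : ContDiff ℝ 1 A) (x y z : ℝ × ℝ) :
    flux A x y z = circulation A x y + circulation A y z + circulation A z x := by
  have hAc : Continuous A := hA.continuous
  have h00 : ∀ p, fieldB A 0 0 p = 0 := fun p => sub_self _
  have h11 : ∀ p, fieldB A 1 1 p = 0 := fun p => sub_self _
  have h10 : ∀ p, fieldB A 1 0 p = -fieldB A 0 1 p := fun p => by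
    simp only [fieldB]; ring
  have hflux : flux A x y z
      = ∫ t in (0:ℝ)..1, ∫ s in (0:ℝ)..t,
          (((y - x).1 * (z - y).2 - (y - x).2 * (z - y).1)
            * fieldB A 0 1 (x + t • (y - x) + s • (z - y))) := by
    rw [flux]
    simp only [Fin.sum_univ_two, h00, h11, h10, comp2]
    simp [intervalIntegral.integral_const_mul, intervalIntegral.integral_neg,
      Prod.fst_sub, Prod.snd_sub]
    ring
  have hcore := core A hA x (y - x) (z - y)
  rw [show x + (y - x) = y from by abel] at hcore
  rw [show y - x + (z - y) = z - x from by abel] at hcore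
  rw [show (y - x).1 + (z - y).1 = (z - x).1 from by
    simp only [Prod.fst_sub]; ring] at hcore
  rw [show (y - x).2 + (z - y).2 = (z - x).2 from by
    simp only [Prod.snd_sub]; ring] at hcore
  have hc1 : circulation A x y = ∫ t in (0:ℝ)..1,
      ((y - x).1 * (A (x + t • (y - x))).1 + (y - x).2 * (A (x + t • (y - x))).2) :=
    circ_repr A hAc x y
  have hc2 : circulation A y z = ∫ s in (0:ℝ)..1,
      ((z - y).1 * (A (y + s • (z - y))).1 + (z - y).2 * (A (y + s • (z - y))).2) :=
    circ_repr A hAc y z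
  have hc3 : circulation A z x = - ∫ t in (0:ℝ)..1,
      ((z - x).1 * (A (x + t • (z - x))).1 + (z - x).2 * (A (x + t • (z - x))).2) := by
    rw [circ_repr A hAc z x, ← intervalIntegral.integral_neg]
    rw [← reflect_integral (fun t : ℝ =>
      -((z - x).1 * (A (x + t • (z - x))).1 + (z - x).2 * (A (x + t • (z - x))).2))]
    apply intervalIntegral.integral_congr
    intro t _
    have h : z + t • (x - z) = x + (1 - t) • (z - x) := by module
    simp only [h, Prod.fst_sub, Prod.snd_sub]
    ring
  rw [hflux, hcore, ← hc1, ← hc2, hc3]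
  ring
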